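/- Let S be a seed of type (n,k) with (n,k) ≠ (4,1), let p_m be the inward spiral vertices generated by S, and let c be the unique point of ⋂_{m≥0} K_m, where K_m is the convex hull of the vertices of T_{n,k}^m(S). Then the spiral winds infinitely many times around c: for every closed ray R emanating from c and every M ≥ 0, there exists m ≥ M such that the segment [p_m, p_{m+1}] meets R. -/

import Mathlib

/-- Planar determinant (cross product) of two vectors of `ℝ²`. -/
def det2 (u v : ℝ × ℝ) : ℝ := u.1 * v.2 - u.2 * v.1

/-- Counterclockwise orientation of an ordered triple of points of `ℝ²`. -/
def ccw (a b c : ℝ × ℝ) : Prop := 0 < det2 (b - a) (c - a)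

/-- The (1-indexed) points `A 1, …, A n` are in strictly convex position in this
(counterclockwise) cyclic order: every triple taken in cyclic order is
counterclockwise. -/
def ConvexCyc (n : ℕ) (A : ℕ → ℝ × ℝ) : Prop :=
  ∀ i j l : ℕ, 1 ≤ i → i < j → j < l → l ≤ n → ccw (A i) (A j) (A l)

/-- A seed of type `(n,k)`: the points `A 1, …, A n` are in strictly convex position
in counterclockwise cyclic order, and for `j = n-k+1, …, n` the point `B j` lies in
the open segment between `A j` and `A (j+1)` (indices mod `n`, so `A (n+1) = A 1`;
note `j % n + 1` equals `j + 1` for `j < n` and equals `1` for `j = n`).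
Only the values `A 1, …, A n` and `B (n-k+1), …, B n` are relevant. -/
def IsSeed (n k : ℕ) (A B : ℕ → ℝ × ℝ) : Prop :=
  ConvexCyc n A ∧
    ∀ j : ℕ, n - k + 1 ≤ j → j ≤ n →
      ∃ t ∈ Set.Ioo (0 : ℝ) 1, B j = A j + t • (A (j % n + 1) - A j)

/-- The point `p` lies on the line through `a` and `b`. -/
def onLine (a b p : ℝ × ℝ) : Prop := det2 (b - a) (p - a) = 0

/-- The intersection point of the line through `a`, `b` with the line through
`c`, `d` (when the two lines are non-parallel). -/
noncomputable def lineInter (a b c d : ℝ × ℝ) : ℝ × ℝ :=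
  a + (det2 (c - a) (d - c) / det2 (b - a) (d - c)) • (b - a)

/-- Auxiliary descending recursion producing the points `B*`: `BstAux n A Astar d`
is the point `B*_(n-d)`.  For `d = 0`, `B*_n` is the intersection of the line
through `A 1` and `A*_2` with the line through `A*_n` and `A*_1`; descending,
`B*_j` (`j = n - d - 1`) is the intersection of the line through `A (j+1)` and
`B*_(j+1)` with the line through `A*_j` and `A*_(j+1)`. -/
noncomputable def BstAux (n : ℕ) (A Astar : ℕ → ℝ × ℝ) : ℕ → ℝ × ℝ
  | 0 => lineInter (A 1) (Astar 2) (Astar n) (Astar 1)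
  | d + 1 => lineInter (A (n - d)) (BstAux n A Astar d) (Astar (n - d - 1)) (Astar (n - d))

/-- The seed map `T_{n,k}`, sending the configuration `(A, B)` to `(A*, B*)`:
`A*_i = A_(i+1)` for `i = 1, …, n-k`; `A*_i = B_i` for `i = n-k+1, …, n`; and the
points `B*_j`, `j = n, n-1, …, n-k+1`, are produced by the descending intersection
recursion `BstAux`. -/
noncomputable def seedMap (n k : ℕ) (S : (ℕ → ℝ × ℝ) × (ℕ → ℝ × ℝ)) :
    (ℕ → ℝ × ℝ) × (ℕ → ℝ × ℝ) :=
  let Astar : ℕ → ℝ × ℝ := fun i => if i ≤ n - k then S.1 (i + 1) else S.2 i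
  (Astar, fun j => BstAux n S.1 Astar (n - j))

namespace PS
open Set

abbrev Pt := (ℝ × ℝ)

/-- orientation of an ordered triple -/
def D3 (p q r : Pt) : ℝ := det2 (q - p) (r - p)

lemma D3_ex (p q r : Pt) :
    D3 p q r = (q.1 - p.1) * (r.2 - p.2) - (q.2 - p.2) * (r.1 - p.1) := by
  simp [D3, det2]

lemma ccw_iff (p q r : Pt) : ccw p q r ↔ 0 < D3 p q r := Iff.rfl

lemma D3_rot (p q r : Pt) : D3 p q r = D3 q r p := by simp only [D3_ex]; try ring

lemma D3_swap23 (p q r : Pt) : D3 p q r = - D3 p r q := by simp only [D3_ex]; try ring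

lemma D3_self12 (p r : Pt) : D3 p p r = 0 := by simp [D3_ex]
lemma D3_self23 (p q : Pt) : D3 p q q = 0 := by simp only [D3_ex]; ring
lemma D3_self13 (p q : Pt) : D3 p q p = 0 := by simp only [D3_ex]; ring

lemma smul_fst (a : ℝ) (p : Pt) : (a • p).1 = a * p.1 := rfl
lemma smul_snd (a : ℝ) (p : Pt) : (a • p).2 = a * p.2 := rfl

lemma D3_aff1 (p p' q r : Pt) (a : ℝ) :
    D3 (p + a • (p' - p)) q r = (1 - a) * D3 p q r + a * D3 p' q r := by
  simp [D3_ex, smul_fst, smul_snd]; ring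

lemma D3_aff2 (p q q' r : Pt) (a : ℝ) :
    D3 p (q + a • (q' - q)) r = (1 - a) * D3 p q r + a * D3 p q' r := by
  simp [D3_ex, smul_fst, smul_snd]; ring

lemma D3_aff3 (p q r r' : Pt) (a : ℝ) :
    D3 p q (r + a • (r' - r)) = (1 - a) * D3 p q r + a * D3 p q r' := by
  simp [D3_ex, smul_fst, smul_snd]; ring

lemma D3_comb (p q : Pt) (x y : Pt) (a b : ℝ) (hab : a + b = 1) :
    D3 p q (a • x + b • y) = a * D3 p q x + b * D3 p q y := by
  have hb : b = 1 - a := by linarith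
  subst hb
  simp [D3_ex, smul_fst, smul_snd]; ring

/-- open-segment membership with parameter -/
def mem01 (a b x : Pt) : Prop := ∃ t : ℝ, 0 < t ∧ t < 1 ∧ x = a + t • (b - a)

lemma mem01_segment {a b x : Pt} (h : mem01 a b x) : x ∈ segment ℝ a b := by
  obtain ⟨t, ht0, ht1, hx⟩ := h
  rw [segment_eq_image' ℝ a b]
  exact ⟨t, ⟨le_of_lt ht0, le_of_lt ht1⟩, hx.symm⟩

lemma div_pos_lt_one {x y : ℝ} (h : x * y < 0) :
    0 < x / (x - y) ∧ x / (x - y) < 1 := by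
  rcases mul_neg_iff.1 h with ⟨hx, hy⟩ | ⟨hx, hy⟩
  · constructor
    · apply div_pos hx; linarith
    · rw [div_lt_one (by linarith)]; linarith
  · have he : x / (x - y) = (-x) / (y - x) := by
      rw [show y - x = -(x - y) by ring, neg_div_neg_eq]
    rw [he]
    constructor
    · apply div_pos (by linarith) (by linarith)
    · rw [div_lt_one (by linarith)]; linarith

/-- `lineInter a b c d` written with base point `c`, direction `d - c`. -/
lemma lineInter_spec (a b c d : Pt) (hden : D3 a b c ≠ D3 a b d) :
    lineInter a b c d = c + (D3 a b c / (D3 a b c - D3 a b d)) • (d - c) := by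
  have hden' : det2 (b - a) (d - c) ≠ 0 := by
    intro h
    apply hden
    have : det2 (b - a) (d - c) = D3 a b d - D3 a b c := by simp [D3, det2]; ring
    rw [this] at h; linarith
  have h2 : D3 a b c - D3 a b d ≠ 0 := by intro h; apply hden; linarith
  obtain ⟨a1, a2⟩ := a
  obtain ⟨b1, b2⟩ := b
  obtain ⟨c1, c2⟩ := c
  obtain ⟨d1, d2⟩ := d
  simp only [D3_ex, det2, lineInter, Prod.fst_sub, Prod.snd_sub, Prod.mk_sub_mk] at *
  have h3 : (b1 - a1) * (c2 - a2) - (b2 - a2) * (c1 - a1) - ((b1 - a1) * (d2 - a2) - (b2 - a2) * (d1 - a1)) = -((b1 - a1) * (d2 - c2) - (b2 - a2) * (d1 - c1)) := by ring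
  have hE : (b1 - a1) * (d2 - c2) - (b2 - a2) * (d1 - c1) ≠ 0 := hden'
  apply Prod.ext <;>
    simp only [Prod.fst_add, Prod.snd_add, smul_fst, smul_snd, Prod.fst_sub, Prod.snd_sub] <;>
    rw [h3, div_neg, neg_mul, ← sub_eq_add_neg, eq_comm, ← sub_eq_zero] <;> field_simp <;> ring

/-- If `c` and `d` are strictly on opposite sides of line `ab`, the intersection
point is strictly between `c` and `d`. -/
lemma lineInter_mem_cd (a b c d : Pt) (h : D3 a b c * D3 a b d < 0) :
    mem01 c d (lineInter a b c d) := by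
  have hden : D3 a b c ≠ D3 a b d := by
    intro h'; rw [h'] at h; nlinarith
  obtain ⟨h0, h1⟩ := div_pos_lt_one h
  exact ⟨_, h0, h1, lineInter_spec a b c d hden⟩

/-- If `a` and `b` are strictly on opposite sides of line `cd`, the intersection
point is strictly between `a` and `b`. -/
lemma lineInter_mem_ab (a b c d : Pt) (h : D3 c d a * D3 c d b < 0) :
    mem01 a b (lineInter a b c d) := by
  have hnum : det2 (c - a) (d - c) = D3 c d a := by simp [D3, det2]; ring
  have hden : det2 (b - a) (d - c) = D3 c d a - D3 c d b := by simp [D3, det2]; ring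
  obtain ⟨h0, h1⟩ := div_pos_lt_one h
  refine ⟨_, ?_, ?_, rfl⟩ <;> rw [hnum, hden] <;> assumption


/-- cyclic extension of the vertex list -/
def Ac (n : ℕ) (A : ℕ → Pt) : ℕ → Pt := fun i => if i ≤ n then A i else A (i - n)

lemma Ac_low {n : ℕ} (A : ℕ → Pt) {i : ℕ} (h : i ≤ n) : Ac n A i = A i := if_pos h
lemma Ac_high {n : ℕ} (A : ℕ → Pt) {i : ℕ} (h : ¬ i ≤ n) : Ac n A i = A (i - n) := if_neg h

lemma cycP {n : ℕ} {A : ℕ → Pt} (hA : ConvexCyc n A) {a b c : ℕ}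
    (ha : 1 ≤ a) (hab : a < b) (hbc : b < c) (hw : c + 1 ≤ a + n) (han : a ≤ n) :
    0 < D3 (Ac n A a) (Ac n A b) (Ac n A c) := by
  by_cases hb : b ≤ n
  · by_cases hcn : c ≤ n
    · rw [Ac_low A han, Ac_low A hb, Ac_low A hcn]
      exact hA a b c ha hab hbc hcn
    · rw [Ac_low A han, Ac_low A hb, Ac_high A hcn]
      have := hA (c-n) a b (by omega) (by omega) hab hb
      rw [ccw_iff] at this
      rw [D3_rot, D3_rot]
      exact this
  · have hcn : ¬ c ≤ n := by omega
    rw [Ac_low A han, Ac_high A hb, Ac_high A hcn]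
    have := hA (b-n) (c-n) a (by omega) (by omega) (by omega) han
    rw [ccw_iff] at this
    rw [D3_rot]
    exact this

lemma cycNN {n : ℕ} {A : ℕ → Pt} (hA : ConvexCyc n A) {a b c : ℕ}
    (ha : 1 ≤ a) (hab : a ≤ b) (hbc : b ≤ c) (hw : c ≤ a + n) (han : a ≤ n) :
    0 ≤ D3 (Ac n A a) (Ac n A b) (Ac n A c) := by
  rcases eq_or_lt_of_le hab with rfl | hab'
  · simp [D3_self12]
  rcases eq_or_lt_of_le hbc with rfl | hbc'
  · simp [D3_self23]
  rcases eq_or_lt_of_le hw with hw' | hw'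
  · have hEq : Ac n A c = Ac n A a := by
      rw [Ac_high A (by omega), Ac_low A han]
      congr 1
      omega
    rw [hEq, D3_self13]
  · exact le_of_lt (cycP hA ha hab' hbc' (by omega) han)

lemma comb_nonneg {x y t : ℝ} (ht0 : 0 ≤ t) (ht1 : t ≤ 1) (hx : 0 ≤ x) (hy : 0 ≤ y) :
    0 ≤ (1-t)*x + t*y := by nlinarith
lemma comb_pos {x y t : ℝ} (ht0 : 0 < t) (ht1 : t ≤ 1) (hx : 0 ≤ x) (hy : 0 < y) :
    0 < (1-t)*x + t*y := by nlinarith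

/-- "next point" along the boundary: `B j` for `j ≤ n`, and `A 2` past the wrap. -/
def NxtP (n : ℕ) (A B : ℕ → Pt) : ℕ → Pt := fun j => if j ≤ n then B j else A 2

set_option maxHeartbeats 2000000 in
theorem main_step (n k : ℕ) (hn : 4 ≤ n) (hk1 : 1 ≤ k) (hkn : k + 1 ≤ n)
    (A B A' : ℕ → Pt) (hS : IsSeed n k A B)
    (hA' : ∀ i, A' i = if i ≤ n - k then A (i+1) else B i) :
    ConvexCyc n A'
    ∧ (∀ j, n-k+1 ≤ j → j ≤ n → mem01 (B j) (NxtP n A B (j+1)) (BstAux n A A' (n - j)))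
    ∧ (∀ j, n-k+1 ≤ j → j+1 ≤ n → mem01 (A (j+1)) (BstAux n A A' (n-j-1)) (BstAux n A A' (n-j)))
    ∧ mem01 (A 1) (A' 2) (BstAux n A A' 0) := by
  obtain ⟨hconv, hBseed⟩ := hS
  -- B in cyclic-coordinates form
  have hBc : ∀ j, n-k+1 ≤ j → j ≤ n →
      ∃ t : ℝ, 0 < t ∧ t < 1 ∧ B j = Ac n A j + t • (Ac n A (j+1) - Ac n A j) := by
    intro j h1 h2
    obtain ⟨t, ⟨ht0, ht1⟩, hBj⟩ := hBseed j h1 h2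
    refine ⟨t, ht0, ht1, ?_⟩
    rcases eq_or_lt_of_le h2 with rfl | hlt
    · rw [Nat.mod_self] at hBj
      rw [Ac_low A (le_refl j), Ac_high A (by omega), show j + 1 - j = 1 by omega]
      exact hBj
    · rw [Nat.mod_eq_of_lt hlt] at hBj
      rw [Ac_low A (by omega), Ac_low A (by omega)]
      exact hBj
  have hNc : ∀ j, n-k+1 ≤ j → j ≤ n+1 →
      ∃ t : ℝ, 0 < t ∧ t ≤ 1 ∧ NxtP n A B j = Ac n A j + t • (Ac n A (j+1) - Ac n A j) := by
    intro j h1 h2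
    by_cases hj : j ≤ n
    · obtain ⟨t, ht0, ht1, hB⟩ := hBc j h1 hj
      exact ⟨t, ht0, le_of_lt ht1, by simp only [NxtP, if_pos hj]; exact hB⟩
    · have hj' : j = n + 1 := by omega
      subst hj'
      refine ⟨1, one_pos, le_refl 1, ?_⟩
      simp only [NxtP, if_neg (by omega : ¬ n+1 ≤ n)]
      rw [Ac_high A (by omega : ¬ n+1 ≤ n), Ac_high A (by omega : ¬ n+2 ≤ n),
        show n+1-n = 1 by omega, show n+2-n = 2 by omega, one_smul]
      abel
  -- A' in cyclic-coordinates form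
  have hA'c : ∀ i, 1 ≤ i → i ≤ n →
      ∃ t : ℝ, 0 < t ∧ t ≤ 1 ∧ A' i = Ac n A i + t • (Ac n A (i+1) - Ac n A i) := by
    intro i h1 h2
    by_cases hi : i ≤ n - k
    · refine ⟨1, one_pos, le_refl 1, ?_⟩
      rw [hA' i, if_pos hi, Ac_low A h2, Ac_low A (by omega), one_smul]
      abel
    · obtain ⟨t, ht0, ht1, hB⟩ := hBc i (by omega) h2
      exact ⟨t, ht0, le_of_lt ht1, by rw [hA' i, if_neg hi]; exact hB⟩
  -- convexity of the image polygon
  have hconv' : ConvexCyc n A' := by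
    intro i j l hi hij hjl hln
    obtain ⟨t1, ht10, ht11, hEi⟩ := hA'c i hi (by omega)
    obtain ⟨t2, ht20, ht21, hEj⟩ := hA'c j (by omega) (by omega)
    obtain ⟨t3, ht30, ht31, hEl⟩ := hA'c l (by omega) hln
    rw [ccw_iff, hEi, hEj, hEl, D3_aff1, D3_aff2, D3_aff2, D3_aff3, D3_aff3, D3_aff3, D3_aff3]
    have n000 := cycNN hconv (a := i) (b := j) (c := l) (by omega) (by omega) (by omega) (by omega) (by omega)
    have n001 := cycNN hconv (a := i) (b := j) (c := l+1) (by omega) (by omega) (by omega) (by omega) (by omega)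
    have n010 := cycNN hconv (a := i) (b := j+1) (c := l) (by omega) (by omega) (by omega) (by omega) (by omega)
    have n011 := cycNN hconv (a := i) (b := j+1) (c := l+1) (by omega) (by omega) (by omega) (by omega) (by omega)
    have n100 := cycNN hconv (a := i+1) (b := j) (c := l) (by omega) (by omega) (by omega) (by omega) (by omega)
    have n101 := cycNN hconv (a := i+1) (b := j) (c := l+1) (by omega) (by omega) (by omega) (by omega) (by omega)
    have n110 := cycNN hconv (a := i+1) (b := j+1) (c := l) (by omega) (by omega) (by omega) (by omega) (by omega)
    have p111 := cycP hconv (a := i+1) (b := j+1) (c := l+1) (by omega) (by omega) (by omega) (by omega) (by omega)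
    exact comb_pos ht10 ht11
      (comb_nonneg (le_of_lt ht20) ht21
        (comb_nonneg (le_of_lt ht30) ht31 n000 n001)
        (comb_nonneg (le_of_lt ht30) ht31 n010 n011))
      (comb_pos ht20 ht21
        (comb_nonneg (le_of_lt ht30) ht31 n100 n101)
        (comb_pos ht30 ht31 n110 p111))
  refine ⟨hconv', ?_⟩
  -- base case of the descending recursion (computing B*_n)
  have hbase : mem01 (B n) (NxtP n A B (n+1)) (BstAux n A A' 0)
      ∧ mem01 (A 1) (A' 2) (BstAux n A A' 0) := by
    obtain ⟨τ, hτ0, hτ1, hX⟩ := hA'c 2 (by omega) (by omega)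
    obtain ⟨t4, ht40, ht41, hBn⟩ := hBc n (by omega) (le_refl n)
    have hwrap : Ac n A (n+1) = Ac n A 1 := by
      rw [Ac_high A (by omega), Ac_low A (by omega)]
      congr 1
      omega
    rw [hwrap] at hBn
    have hA'n : A' n = B n := by rw [hA' n, if_neg (by omega)]
    have hA'1 : A' 1 = A 2 := by rw [hA' 1, if_pos (by omega)]
    have hA1 : A 1 = Ac n A 1 := (Ac_low A (by omega)).symm
    have hA2 : A 2 = Ac n A 2 := (Ac_low A (by omega)).symm
    have hB0 : BstAux n A A' 0 = lineInter (A 1) (A' 2) (A' n) (A' 1) := rfl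
    have hQ12n := cycP hconv (a:=1) (b:=2) (c:=n) (by omega) (by omega) (by omega) (by omega) (by omega)
    have hQ13n := cycP hconv (a:=1) (b:=3) (c:=n) (by omega) (by omega) (by omega) (by omega) (by omega)
    have hQ123 := cycP hconv (a:=1) (b:=2) (c:=3) (by omega) (by omega) (by omega) (by omega) (by omega)
    have hQ23n := cycP hconv (a:=2) (b:=3) (c:=n) (by omega) (by omega) (by omega) (by omega) (by omega)
    have hcpos : 0 < D3 (A 1) (A' 2) (A' n) := by
      have e : D3 (A 1) (A' 2) (A' n) =
          (1-t4) * ((1-τ) * D3 (Ac n A 1) (Ac n A 2) (Ac n A n)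
            + τ * D3 (Ac n A 1) (Ac n A 3) (Ac n A n)) := by
        rw [hA'n, hA1, hX, hBn]
        simp only [D3_ex, Prod.fst_add, Prod.snd_add, smul_fst, smul_snd,
          Prod.fst_sub, Prod.snd_sub]
        ring
      rw [e]
      exact mul_pos (by linarith) (comb_pos hτ0 hτ1 (le_of_lt hQ12n) hQ13n)
    have hdneg : D3 (A 1) (A' 2) (A' 1) < 0 := by
      have e : D3 (A 1) (A' 2) (A' 1) = -(τ * D3 (Ac n A 1) (Ac n A 2) (Ac n A 3)) := by
        rw [hA'1, hA1, hA2, hX]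
        simp only [D3_ex, Prod.fst_add, Prod.snd_add, smul_fst, smul_snd,
          Prod.fst_sub, Prod.snd_sub]
        ring
      rw [e]
      have := mul_pos hτ0 hQ123
      linarith
    have hmem1 : mem01 (A' n) (A' 1) (BstAux n A A' 0) := by
      rw [hB0]
      exact lineInter_mem_cd _ _ _ _ (mul_neg_of_pos_of_neg hcpos hdneg)
    have hga : D3 (A' n) (A' 1) (A 1) < 0 := by
      have e : D3 (A' n) (A' 1) (A 1) = -((1-t4) * D3 (Ac n A 1) (Ac n A 2) (Ac n A n)) := by
        rw [hA'n, hA'1, hA1, hA2, hBn]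
        simp only [D3_ex, Prod.fst_add, Prod.snd_add, smul_fst, smul_snd,
          Prod.fst_sub, Prod.snd_sub]
        ring
      rw [e]
      have : 0 < (1-t4) * D3 (Ac n A 1) (Ac n A 2) (Ac n A n) :=
        mul_pos (by linarith) hQ12n
      linarith
    have hgb : 0 < D3 (A' n) (A' 1) (A' 2) := by
      have e : D3 (A' n) (A' 1) (A' 2) =
          τ * ((1-t4) * D3 (Ac n A 2) (Ac n A 3) (Ac n A n)
            + t4 * D3 (Ac n A 1) (Ac n A 2) (Ac n A 3)) := by
        rw [hA'n, hA'1, hA2, hX, hBn]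
        simp only [D3_ex, Prod.fst_add, Prod.snd_add, smul_fst, smul_snd,
          Prod.fst_sub, Prod.snd_sub]
        ring
      rw [e]
      apply mul_pos hτ0
      nlinarith [mul_pos ht40 hQ123, mul_nonneg (by linarith : (0:ℝ) ≤ 1 - t4) (le_of_lt hQ23n)]
    have hmem2 : mem01 (A 1) (A' 2) (BstAux n A A' 0) := by
      rw [hB0]
      exact lineInter_mem_ab _ _ _ _ (mul_neg_of_neg_of_pos hga hgb)
    constructor
    · have h1 : NxtP n A B (n+1) = A 2 := by
        simp only [NxtP, if_neg (by omega : ¬ n+1 ≤ n)]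
      rw [h1, ← hA'n, ← hA'1]
      exact hmem1
    · exact hmem2
  -- descending step
  have hstep : ∀ d, d + 2 ≤ k →
      mem01 (B (n-d)) (NxtP n A B (n-d+1)) (BstAux n A A' d) →
      (mem01 (B (n-d-1)) (NxtP n A B (n-d)) (BstAux n A A' (d+1))
        ∧ mem01 (A (n-d)) (BstAux n A A' d) (BstAux n A A' (d+1))) := by
    intro d hd hinv
    obtain ⟨j, hj1, hj2⟩ : ∃ j, n - d = j + 1 ∧ n - d - 1 = j := ⟨n-d-1, by omega, rfl⟩
    rw [hj1, show j+1+1 = j+2 from rfl] at hinv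
    rw [hj2, hj1]
    have hjlow : n - k + 1 ≤ j := by omega
    have hunf : BstAux n A A' (d+1)
        = lineInter (A (j+1)) (BstAux n A A' d) (A' j) (A' (j+1)) := by
      show lineInter (A (n-d)) (BstAux n A A' d) (A' (n-d-1)) (A' (n-d)) = _
      rw [hj2, hj1]
    obtain ⟨s, hs0, hs1, hW⟩ := hinv
    obtain ⟨t1, ht10, ht11, hBj⟩ := hBc j hjlow (by omega)
    obtain ⟨t2, ht20, ht21, hBj1⟩ := hBc (j+1) (by omega) (by omega)
    obtain ⟨t3, ht30, ht31, hN⟩ := hNc (j+2) (by omega) (by omega)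
    rw [show j+1+1 = j+2 from rfl] at hBj1
    rw [show j+2+1 = j+3 from rfl] at hN
    have hA2 : A (j+1) = Ac n A (j+1) := (Ac_low A (by omega)).symm
    have hA'j : A' j = B j := by rw [hA' j, if_neg (by omega)]
    have hA'j1 : A' (j+1) = B (j+1) := by rw [hA' (j+1), if_neg (by omega)]
    have hP123 := cycP hconv (a:=j) (b:=j+1) (c:=j+2) (by omega) (by omega) (by omega) (by omega) (by omega)
    have hP124 := cycP hconv (a:=j) (b:=j+1) (c:=j+3) (by omega) (by omega) (by omega) (by omega) (by omega)
    have hP134 := cycP hconv (a:=j) (b:=j+2) (c:=j+3) (by omega) (by omega) (by omega) (by omega) (by omega)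
    have hP234 := cycP hconv (a:=j+1) (b:=j+2) (c:=j+3) (by omega) (by omega) (by omega) (by omega) (by omega)
    have SF1 : 0 < D3 (A (j+1)) (BstAux n A A' d) (B j) := by
      have e : D3 (A (j+1)) (BstAux n A A' d) (B j)
          = (1-t1) * ((1-s) * (t2 * D3 (Ac n A j) (Ac n A (j+1)) (Ac n A (j+2)))
            + s * ((1-t3) * D3 (Ac n A j) (Ac n A (j+1)) (Ac n A (j+2))
                 + t3 * D3 (Ac n A j) (Ac n A (j+1)) (Ac n A (j+3)))) := by
        rw [hA2, hW, hN, hBj1, hBj]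
        simp only [D3_ex, Prod.fst_add, Prod.snd_add, smul_fst, smul_snd,
          Prod.fst_sub, Prod.snd_sub]
        ring
      rw [e]
      exact mul_pos (by linarith)
        (comb_pos hs0 (le_of_lt hs1) (mul_nonneg (le_of_lt ht20) (le_of_lt hP123))
          (comb_pos ht30 ht31 (le_of_lt hP123) hP124))
    have SF2 : D3 (A (j+1)) (BstAux n A A' d) (B (j+1)) < 0 := by
      have e : D3 (A (j+1)) (BstAux n A A' d) (B (j+1))
          = -(s * (t2 * (t3 * D3 (Ac n A (j+1)) (Ac n A (j+2)) (Ac n A (j+3))))) := by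
        rw [hA2, hW, hN, hBj1]
        simp only [D3_ex, Prod.fst_add, Prod.snd_add, smul_fst, smul_snd,
          Prod.fst_sub, Prod.snd_sub]
        ring
      rw [e]
      have := mul_pos hs0 (mul_pos ht20 (mul_pos ht30 hP234))
      linarith
    have SF3 : D3 (B j) (B (j+1)) (A (j+1)) < 0 := by
      have e : D3 (B j) (B (j+1)) (A (j+1))
          = -((1-t1) * (t2 * D3 (Ac n A j) (Ac n A (j+1)) (Ac n A (j+2)))) := by
        rw [hA2, hBj1, hBj]
        simp only [D3_ex, Prod.fst_add, Prod.snd_add, smul_fst, smul_snd,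
          Prod.fst_sub, Prod.snd_sub]
        ring
      rw [e]
      have : 0 < (1-t1) * (t2 * D3 (Ac n A j) (Ac n A (j+1)) (Ac n A (j+2))) :=
        mul_pos (by linarith) (mul_pos ht20 hP123)
      linarith
    have SF4 : 0 < D3 (B j) (B (j+1)) (BstAux n A A' d) := by
      have e : D3 (B j) (B (j+1)) (BstAux n A A' d)
          = s * ((1-t1)*(1-t2)*(1-t3)*D3 (Ac n A j) (Ac n A (j+1)) (Ac n A (j+2))
            + (1-t1)*(1-t2)*t3*D3 (Ac n A j) (Ac n A (j+1)) (Ac n A (j+3))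
            + (1-t1)*t2*t3*D3 (Ac n A j) (Ac n A (j+2)) (Ac n A (j+3))
            + t1*t2*t3*D3 (Ac n A (j+1)) (Ac n A (j+2)) (Ac n A (j+3))) := by
        rw [hW, hN, hBj1, hBj]
        simp only [D3_ex, Prod.fst_add, Prod.snd_add, smul_fst, smul_snd,
          Prod.fst_sub, Prod.snd_sub]
        ring
      rw [e]
      apply mul_pos hs0
      nlinarith [mul_pos (mul_pos (mul_pos ht10 ht20) ht30) hP234,
        mul_nonneg (mul_nonneg (mul_nonneg (by linarith : (0:ℝ) ≤ 1-t1) (by linarith : (0:ℝ) ≤ 1-t2)) (by linarith : (0:ℝ) ≤ 1-t3)) (le_of_lt hP123),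
        mul_nonneg (mul_nonneg (mul_nonneg (by linarith : (0:ℝ) ≤ 1-t1) (by linarith : (0:ℝ) ≤ 1-t2)) (le_of_lt ht30)) (le_of_lt hP124),
        mul_nonneg (mul_nonneg (mul_nonneg (by linarith : (0:ℝ) ≤ 1-t1) (le_of_lt ht20)) (le_of_lt ht30)) (le_of_lt hP134)]
    constructor
    · have hNj1 : NxtP n A B (j+1) = B (j+1) := by
        simp only [NxtP, if_pos (show j+1 ≤ n by omega)]
      rw [hNj1, hunf, ← hA'j, ← hA'j1]
      exact lineInter_mem_cd _ _ _ _
        (by rw [hA'j, hA'j1]; exact mul_neg_of_pos_of_neg SF1 SF2)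
    · rw [hunf]
      exact lineInter_mem_ab _ _ _ _
        (by rw [hA'j, hA'j1]; exact mul_neg_of_neg_of_pos SF3 SF4)
  have INV1 : ∀ d, d + 1 ≤ k → mem01 (B (n-d)) (NxtP n A B (n-d+1)) (BstAux n A A' d) := by
    intro d
    induction d with
    | zero => intro _; simpa using hbase.1
    | succ d ih =>
      intro hd
      have := (hstep d (by omega) (ih (by omega))).1
      rw [show n - d - 1 = n - (d+1) by omega, show n - d = n - (d+1) + 1 by omega] at this
      exact this
  refine ⟨?_, ?_, hbase.2⟩
  · intro j hj1 hj2
    have := INV1 (n - j) (by omega)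
    rw [show n - (n - j) = j by omega] at this
    exact this
  · intro j hj1 hj2
    have := (hstep (n - j - 1) (by omega) (INV1 (n-j-1) (by omega))).2
    rw [show n - (n-j-1) = j + 1 by omega, show n-j-1+1 = n - j by omega] at this
    exact this


/-! ### Iteration -/

section Iter

variable (n k : ℕ) (A B : ℕ → Pt)

noncomputable def Sm (m : ℕ) : (ℕ → Pt) × (ℕ → Pt) := (seedMap n k)^[m] (A, B)

noncomputable def pm (m : ℕ) : Pt := (Sm n k A B m).1 1

lemma Sm_succ (m : ℕ) : Sm n k A B (m+1) = seedMap n k (Sm n k A B m) :=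
  Function.iterate_succ_apply' _ _ _

lemma Sm_fst (m : ℕ) (i : ℕ) :
    (Sm n k A B (m+1)).1 i
      = if i ≤ n - k then (Sm n k A B m).1 (i+1) else (Sm n k A B m).2 i := by
  rw [Sm_succ]; rfl

lemma Sm_snd (m : ℕ) (j : ℕ) :
    (Sm n k A B (m+1)).2 j = BstAux n (Sm n k A B m).1 (Sm n k A B (m+1)).1 (n - j) := by
  rw [Sm_succ]; rfl

end Iter

section Iter2

variable {n k : ℕ} {A B : ℕ → Pt} (hn : 4 ≤ n) (hk1 : 1 ≤ k) (hkn : k + 1 ≤ n)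
  (hS : IsSeed n k A B)

include hn hk1 hkn hS

lemma seed_all : ∀ m, IsSeed n k (Sm n k A B m).1 (Sm n k A B m).2 := by
  intro m
  induction m with
  | zero => exact hS
  | succ m ih =>
    have hA'm : ∀ i, (Sm n k A B (m+1)).1 i
        = if i ≤ n - k then (Sm n k A B m).1 (i+1) else (Sm n k A B m).2 i :=
      Sm_fst n k A B m
    have hms := main_step n k hn hk1 hkn (Sm n k A B m).1 (Sm n k A B m).2
      (Sm n k A B (m+1)).1 ih hA'm
    refine ⟨hms.1, ?_⟩
    intro j hj1 hj2
    obtain ⟨t, ht0, ht1, he⟩ := hms.2.1 j hj1 hj2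
    refine ⟨t, ⟨ht0, ht1⟩, ?_⟩
    rw [Sm_snd n k A B m j]
    have e1 : (Sm n k A B (m+1)).1 j = (Sm n k A B m).2 j := by
      rw [hA'm j, if_neg (by omega)]
    by_cases hlt : j < n
    · have e2 : (Sm n k A B (m+1)).1 (j % n + 1) = (Sm n k A B m).2 (j+1) := by
        rw [Nat.mod_eq_of_lt hlt, hA'm (j+1), if_neg (by omega)]
      rw [e1, e2]
      have e3 : NxtP n (Sm n k A B m).1 (Sm n k A B m).2 (j+1) = (Sm n k A B m).2 (j+1) := by
        simp only [NxtP, if_pos (by omega : j + 1 ≤ n)]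
      rw [e3] at he
      exact he
    · have hjn : j = n := by omega
      have e2 : (Sm n k A B (m+1)).1 (j % n + 1) = (Sm n k A B m).1 2 := by
        rw [show j % n = 0 by rw [hjn, Nat.mod_self], hA'm 1, if_pos (by omega)]
      rw [e1, e2]
      have e3 : NxtP n (Sm n k A B m).1 (Sm n k A B m).2 (j+1) = (Sm n k A B m).1 2 := by
        simp only [NxtP, if_neg (by omega : ¬ j + 1 ≤ n)]
      rw [e3] at he
      exact he

lemma vert_spiral : ∀ j, j ≤ n - k → ∀ m, (Sm n k A B m).1 (j+1) = pm n k A B (m+j) := by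
  intro j
  induction j with
  | zero => intro _ m; rfl
  | succ j ih =>
    intro hj m
    have e1 : (Sm n k A B (m+1)).1 (j+1) = (Sm n k A B m).1 (j+1+1) := by
      rw [Sm_fst n k A B m (j+1), if_pos (by omega)]
    have e2 := ih (by omega) (m+1)
    rw [e1] at e2
    rw [e2, show m + 1 + j = m + (j+1) by omega]

lemma chord_n : ∀ m, mem01 (pm n k A B m) (pm n k A B (m+2)) ((Sm n k A B (m+2)).1 n) := by
  intro m
  have hA'm : ∀ i, (Sm n k A B (m+1)).1 i
      = if i ≤ n - k then (Sm n k A B m).1 (i+1) else (Sm n k A B m).2 i :=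
    Sm_fst n k A B m
  have hms := main_step n k hn hk1 hkn (Sm n k A B m).1 (Sm n k A B m).2
    (Sm n k A B (m+1)).1 (seed_all hn hk1 hkn hS m) hA'm
  have htop := hms.2.2.2
  have e1 : (Sm n k A B m).1 1 = pm n k A B m := rfl
  have e2 : (Sm n k A B (m+1)).1 2 = pm n k A B (m+2) := by
    have := vert_spiral hn hk1 hkn hS 1 (by omega) (m+1)
    rw [show m + 1 + 1 = m + 2 by omega] at this
    exact this
  have e3 : BstAux n (Sm n k A B m).1 (Sm n k A B (m+1)).1 0 = (Sm n k A B (m+2)).1 n := by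
    rw [Sm_fst n k A B (m+1) n, if_neg (by omega), Sm_snd n k A B m n, Nat.sub_self]
  rw [e1, e2, e3] at htop
  exact htop

lemma chord_high : ∀ m j, n - k + 1 ≤ j → j + 1 ≤ n →
    mem01 ((Sm n k A B m).1 (j+1)) ((Sm n k A B (m+2)).1 (j+1)) ((Sm n k A B (m+2)).1 j) := by
  intro m j hj1 hj2
  have hA'm : ∀ i, (Sm n k A B (m+1)).1 i
      = if i ≤ n - k then (Sm n k A B m).1 (i+1) else (Sm n k A B m).2 i :=
    Sm_fst n k A B m
  have hms := main_step n k hn hk1 hkn (Sm n k A B m).1 (Sm n k A B m).2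
    (Sm n k A B (m+1)).1 (seed_all hn hk1 hkn hS m) hA'm
  have h := hms.2.2.1 j hj1 hj2
  have e1 : BstAux n (Sm n k A B m).1 (Sm n k A B (m+1)).1 (n - j - 1)
      = (Sm n k A B (m+2)).1 (j+1) := by
    rw [Sm_fst n k A B (m+1) (j+1), if_neg (by omega), Sm_snd n k A B m (j+1),
      show n - (j+1) = n - j - 1 by omega]
  have e2 : BstAux n (Sm n k A B m).1 (Sm n k A B (m+1)).1 (n - j)
      = (Sm n k A B (m+2)).1 j := by
    rw [Sm_fst n k A B (m+1) j, if_neg (by omega), Sm_snd n k A B m j]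
  rw [e1, e2] at h
  exact h

lemma hull_high : ∀ N m j, n - k + 2 ≤ j → j ≤ n → 2*(n-j) + 2 ≤ m → m + (n-j) ≤ N →
    (Sm n k A B m).1 j ∈ convexHull ℝ (pm n k A B '' Set.Ici (m - (2*(n-j)+2))) := by
  intro N
  induction N using Nat.strong_induction_on with
  | _ N ihN =>
    intro m j hj1 hj2 hm hN
    rcases eq_or_lt_of_le hj2 with rfl | hjlt
    · -- j = n
      have h := chord_n hn hk1 hkn hS (m - 2)
      rw [show m - 2 + 2 = m by omega] at h
      have hmem := mem01_segment h
      rw [Nat.sub_self, Nat.mul_zero, Nat.zero_add]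
      refine (convex_convexHull ℝ _).segment_subset ?_ ?_ hmem
      · exact subset_convexHull ℝ _ ⟨m - 2, Set.mem_Ici.mpr (le_refl _), rfl⟩
      · exact subset_convexHull ℝ _ ⟨m, Set.mem_Ici.mpr (by omega), rfl⟩
    · -- j < n
      have h := chord_high hn hk1 hkn hS (m - 2) j (by omega) (by omega)
      rw [show m - 2 + 2 = m by omega] at h
      have hmem := mem01_segment h
      have hX : (Sm n k A B (m-2)).1 (j+1) ∈
          convexHull ℝ (pm n k A B '' Set.Ici (m - (2*(n-j)+2))) := by
        have := ihN ((m-2) + (n-(j+1))) (by omega) (m-2) (j+1) (by omega) (by omega)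
          (by omega) (le_refl _)
        rw [show (m-2) - (2*(n-(j+1))+2) = m - (2*(n-j)+2) by omega] at this
        exact this
      have hY : (Sm n k A B m).1 (j+1) ∈
          convexHull ℝ (pm n k A B '' Set.Ici (m - (2*(n-j)+2))) := by
        have := ihN (m + (n-(j+1))) (by omega) m (j+1) (by omega) (by omega)
          (by omega) (le_refl _)
        refine convexHull_mono ?_ this
        exact Set.image_mono (Set.Ici_subset_Ici.mpr (by omega))
      exact (convex_convexHull ℝ _).segment_subset hX hY hmem

lemma hull_all : ∀ (M' m : ℕ), M' + 2*n + 2 ≤ m → ∀ j, 1 ≤ j → j ≤ n →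
    (Sm n k A B m).1 j ∈ convexHull ℝ (pm n k A B '' Set.Ici M') := by
  intro M' m hm j hj1 hj2
  by_cases hj : j ≤ n - k + 1
  · have := vert_spiral hn hk1 hkn hS (j-1) (by omega) m
    rw [show j - 1 + 1 = j by omega] at this
    rw [this]
    exact subset_convexHull ℝ _ ⟨m + (j-1), Set.mem_Ici.mpr (by omega), rfl⟩
  · have := hull_high hn hk1 hkn hS (m + n) m j (by omega) hj2 (by omega) (by omega)
    refine convexHull_mono ?_ this
    exact Set.image_mono (Set.Ici_subset_Ici.mpr (by omega))

end Iter2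


/-! ### Final assembly tools -/

lemma det2_zero_right (u : Pt) : det2 u (0 : Pt) = 0 := by simp [det2]

/-- the linear functional `x ↦ det2 v x`. -/
noncomputable def detL (v : Pt) : Pt →ₗ[ℝ] ℝ where
  toFun x := v.1 * x.2 - v.2 * x.1
  map_add' x y := by simp only [Prod.fst_add, Prod.snd_add]; ring
  map_smul' r x := by simp only [smul_fst, smul_snd, RingHom.id_apply, smul_eq_mul]; ring

lemma D3_detL (p q x : Pt) : D3 p q x = detL (q - p) x - detL (q - p) p := by
  simp only [D3_ex, detL, LinearMap.coe_mk, AddHom.coe_mk, Prod.fst_sub, Prod.snd_sub]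
  ring

lemma convex_pos_half (φ : Pt → ℝ)
    (hφ : ∀ (x y : Pt) (a b : ℝ), 0 ≤ a → 0 ≤ b → a + b = 1 → φ (a•x + b•y) = a*φ x + b*φ y) :
    Convex ℝ {x : Pt | 0 < φ x} := by
  intro x hx y hy a b ha hb hab
  simp only [Set.mem_setOf_eq] at *
  rw [hφ x y a b ha hb hab]
  rcases eq_or_lt_of_le ha with h | h
  · have hb1 : b = 1 := by linarith
    rw [← h, hb1]
    simpa using hy
  · nlinarith [mul_pos h hx, mul_nonneg hb (le_of_lt hy)]

lemma halfplane_convex (p q : Pt) : Convex ℝ {x : Pt | 0 ≤ D3 p q x} := by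
  intro x hx y hy a b ha hb hab
  simp only [Set.mem_setOf_eq] at *
  rw [D3_comb p q x y a b hab]
  exact add_nonneg (mul_nonneg ha hx) (mul_nonneg hb hy)

/-- If `cc` lies in the hull of `V`, all of `V` is on the nonnegative side of the
line `pq`, the only points of `V` on the line are `p` and `q`, and `cc` is on the
line, then `cc` lies on the segment `[p,q]`. -/
lemma hull_line (V : Set Pt) (p q cc : Pt) (hV : ∀ v ∈ V, 0 ≤ D3 p q v)
    (hV2 : ∀ v ∈ V, D3 p q v = 0 → v = p ∨ v = q)
    (hcc : cc ∈ convexHull ℝ V) (h0 : D3 p q cc = 0) : cc ∈ segment ℝ p q := by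
  rw [convexHull_eq] at hcc
  obtain ⟨ι, t, w, z, hw0, hw1, hz, hcm⟩ := hcc
  classical
  have hsum : cc = ∑ i ∈ t, w i • z i := by
    rw [← hcm, Finset.centerMass_eq_of_sum_1 t z hw1]
  have hgc : ∑ i ∈ t, w i * D3 p q (z i) = 0 := by
    have h1 : detL (q-p) (∑ i ∈ t, w i • z i) = ∑ i ∈ t, w i * detL (q-p) (z i) := by
      rw [map_sum]
      refine Finset.sum_congr rfl fun i _ => ?_
      rw [map_smul, smul_eq_mul]
    have h2 : ∑ i ∈ t, w i * D3 p q (z i)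
        = ∑ i ∈ t, (w i * detL (q-p) (z i) - w i * detL (q-p) p) := by
      refine Finset.sum_congr rfl fun i _ => ?_
      rw [D3_detL]; ring
    rw [h2, Finset.sum_sub_distrib, ← h1, ← hsum, ← Finset.sum_mul, hw1, one_mul, ← D3_detL]
    exact h0
  have hterms : ∀ i ∈ t, w i * D3 p q (z i) = 0 :=
    (Finset.sum_eq_zero_iff_of_nonneg (fun i hi => mul_nonneg (hw0 i hi) (hV _ (hz i hi)))).mp hgc
  have hzmem : ∀ i ∈ t.filter (fun i => w i ≠ 0), z i ∈ ({p, q} : Set Pt) := by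
    intro i hi
    rw [Finset.mem_filter] at hi
    obtain ⟨hit, hwi⟩ := hi
    have h3 : D3 p q (z i) = 0 := by
      rcases mul_eq_zero.mp (hterms i hit) with h | h
      · exact absurd h hwi
      · exact h
    rcases hV2 _ (hz i hit) h3 with h | h <;> simp [h]
  have hcm2 : (t.filter (fun i => w i ≠ 0)).centerMass w z = cc := by
    rw [Finset.centerMass_filter_ne_zero z, hcm]
  rw [← convexHull_pair, ← hcm2]
  apply Finset.centerMass_mem_convexHull
  · intro i hi; exact hw0 i (Finset.mem_filter.mp hi).1
  · rw [Finset.sum_filter_ne_zero, hw1]; norm_num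
  · exact hzmem

/-- If the direction `u` points (weakly) between the directions of `p1 - cc` and
`p2 - cc` (which span positively), the ray from `cc` along `u` meets `[p1, p2]`. -/
lemma cross_lemma (u p1 p2 cc : Pt) (hu : u ≠ 0)
    (hD : 0 < det2 (p1 - cc) (p2 - cc))
    (h1 : det2 u (p1 - cc) ≤ 0) (h2 : 0 ≤ det2 u (p2 - cc)) :
    ∃ x ∈ segment ℝ p1 p2, ∃ t : ℝ, 0 ≤ t ∧ x = cc + t • u := by
  have hβ0 : 0 ≤ -det2 u (p1 - cc) := by linarith
  have hid : det2 (p1 - cc) (p2 - cc) • u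
      = det2 u (p2 - cc) • (p1 - cc) + (-det2 u (p1 - cc)) • (p2 - cc) := by
    apply Prod.ext <;>
      simp only [det2, Prod.fst_add, Prod.snd_add, smul_fst, smul_snd,
        Prod.fst_sub, Prod.snd_sub] <;> ring
  have hS : 0 < det2 u (p2 - cc) + -det2 u (p1 - cc) := by
    rcases lt_or_eq_of_le (add_nonneg h2 hβ0) with h | h
    · exact h
    · exfalso
      have hα : det2 u (p2 - cc) = 0 := by linarith
      have hβ : -det2 u (p1 - cc) = 0 := by linarith
      rw [hα, hβ] at hid
      simp only [zero_smul, add_zero] at hid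
      rcases smul_eq_zero.mp hid with h' | h'
      · linarith
      · exact hu h'
  refine ⟨cc + (det2 (p1 - cc) (p2 - cc) / (det2 u (p2 - cc) + -det2 u (p1 - cc))) • u,
    ?_, _, div_nonneg (le_of_lt hD) (le_of_lt hS), rfl⟩
  refine ⟨det2 u (p2 - cc) / (det2 u (p2 - cc) + -det2 u (p1 - cc)),
    -det2 u (p1 - cc) / (det2 u (p2 - cc) + -det2 u (p1 - cc)),
    div_nonneg h2 hS.le, div_nonneg hβ0 hS.le, by field_simp, ?_⟩
  have hSne : det2 u (p2 - cc) + -det2 u (p1 - cc) ≠ 0 := ne_of_gt hS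
  have hv : det2 u (p2 - cc) • p1 + (-det2 u (p1 - cc)) • p2
      = (det2 u (p2 - cc) + -det2 u (p1 - cc)) • cc + det2 (p1 - cc) (p2 - cc) • u := by
    apply Prod.ext <;>
      simp only [det2, Prod.fst_add, Prod.snd_add, smul_fst, smul_snd,
        Prod.fst_sub, Prod.snd_sub] <;> ring
  have e1 : ∀ (r : ℝ) (v : Pt), (r / (det2 u (p2 - cc) + -det2 u (p1 - cc))) • v
      = (1/(det2 u (p2 - cc) + -det2 u (p1 - cc))) • (r • v) := by
    intro r v
    rw [smul_smul]
    congr 1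
    ring
  rw [e1 (det2 u (p2 - cc)) p1, e1 (-det2 u (p1 - cc)) p2,
    e1 (det2 (p1 - cc) (p2 - cc)) u, ← smul_add, hv, smul_add, smul_smul,
    one_div_mul_cancel hSne, one_smul]

section Iter3

variable {n k : ℕ} {A B : ℕ → Pt} (hn : 4 ≤ n) (hk1 : 1 ≤ k) (hkn : k + 1 ≤ n)
  (hS : IsSeed n k A B)

include hn hk1 hkn hS

lemma pm_succ (m : ℕ) : pm n k A B (m+1) = (Sm n k A B m).1 2 := by
  have := vert_spiral hn hk1 hkn hS 1 (by omega) m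
  simpa using this.symm

lemma vertex_side (m : ℕ) : ∀ v ∈ (Sm n k A B m).1 '' Set.Icc 1 n,
    0 ≤ D3 (pm n k A B m) (pm n k A B (m+1)) v := by
  intro v hv
  obtain ⟨j, ⟨hj1, hj2⟩, rfl⟩ := hv
  have hp : pm n k A B m = (Sm n k A B m).1 1 := rfl
  rw [hp, pm_succ hn hk1 hkn hS m]
  by_cases h1 : j = 1
  · subst h1; exact le_of_eq (D3_self13 _ _).symm
  by_cases h2 : j = 2
  · subst h2; exact le_of_eq (D3_self23 _ _).symm
  · have h3 : 3 ≤ j := by omega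
    exact le_of_lt ((seed_all hn hk1 hkn hS m).1 1 2 j (by omega) (by omega) (by omega) hj2)

lemma vertex_side' (m : ℕ) : ∀ v ∈ (Sm n k A B m).1 '' Set.Icc 1 n,
    D3 (pm n k A B m) (pm n k A B (m+1)) v = 0 →
      v = pm n k A B m ∨ v = pm n k A B (m+1) := by
  intro v hv h0
  obtain ⟨j, ⟨hj1, hj2⟩, rfl⟩ := hv
  have hp : pm n k A B m = (Sm n k A B m).1 1 := rfl
  by_cases h1 : j = 1
  · subst h1; exact Or.inl rfl
  by_cases h2 : j = 2
  · subst h2; exact Or.inr (pm_succ hn hk1 hkn hS m).symm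
  · exfalso
    rw [hp, pm_succ hn hk1 hkn hS m] at h0
    have := (seed_all hn hk1 hkn hS m).1 1 2 j (by omega) (by omega) (by omega) hj2
    rw [ccw_iff, h0] at this
    exact lt_irrefl 0 this

end Iter3



end PS


set_option maxHeartbeats 1000000 in
/-- **A PLC pentagram spiral winds infinitely many times around its limit point.**
Let `S = (A,B)` be a seed of type `(n,k)` with `(n,k) ≠ (4,1)`, let
`p m = A_1(T_{n,k}^m(S))` be the inward spiral vertices, and let `c` be the unique
point of `⋂ m, K m`, where `K m` is the convex hull of the vertices of
`T_{n,k}^m(S)`.  Then for every closed ray `{c + t•u : t ≥ 0}` emanating from `c`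
(`u ≠ 0`) and every `M`, there exists `m ≥ M` such that the segment
`[p m, p (m+1)]` meets the ray. -/
theorem spiral_winds_infinitely (n k : ℕ) (hn : 4 ≤ n) (hk1 : 1 ≤ k) (hkn : k ≤ n - 1)
    (hne : ¬(n = 4 ∧ k = 1)) (A B : ℕ → ℝ × ℝ) (hS : IsSeed n k A B)
    (c : ℝ × ℝ)
    (hc : (⋂ m : ℕ, convexHull ℝ (((seedMap n k)^[m] (A, B)).1 '' Set.Icc 1 n)) = {c}) :
    ∀ u : ℝ × ℝ, u ≠ 0 → ∀ M : ℕ, ∃ m : ℕ, M ≤ m ∧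
      ∃ x ∈ segment ℝ (((seedMap n k)^[m] (A, B)).1 1)
          (((seedMap n k)^[m + 1] (A, B)).1 1),
        ∃ t : ℝ, 0 ≤ t ∧ x = c + t • u := by
  intro u hu M
  have hkn' : k + 1 ≤ n := by omega
  by_contra hcon
  push_neg at hcon
  have hcon' : ∀ m, M ≤ m →
      ∀ x ∈ segment ℝ (PS.pm n k A B m) (PS.pm n k A B (m+1)),
        ∀ t : ℝ, 0 ≤ t → x ≠ c + t • u := hcon
  have hcK : ∀ m, c ∈ convexHull ℝ ((PS.Sm n k A B m).1 '' Set.Icc 1 n) := by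
    intro m
    have h1 : c ∈ ⋂ m : ℕ, convexHull ℝ (((seedMap n k)^[m] (A, B)).1 '' Set.Icc 1 n) := by
      rw [hc]
      exact Set.mem_singleton c
    exact Set.mem_iInter.mp h1 m
  have hΔ : ∀ m, 0 ≤ PS.D3 c (PS.pm n k A B m) (PS.pm n k A B (m+1)) := by
    intro m
    have hsub : convexHull ℝ ((PS.Sm n k A B m).1 '' Set.Icc 1 n)
        ⊆ {x : ℝ×ℝ | 0 ≤ PS.D3 (PS.pm n k A B m) (PS.pm n k A B (m+1)) x} :=
      convexHull_min (PS.vertex_side hn hk1 hkn' hS m) (PS.halfplane_convex _ _)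
    have h2 := hsub (hcK m)
    rw [PS.D3_rot]
    exact h2
  have hnocross : ∀ m, M ≤ m →
      ¬(det2 u (PS.pm n k A B m - c) ≤ 0 ∧ 0 ≤ det2 u (PS.pm n k A B (m+1) - c)) := by
    rintro m hm ⟨h1, h2⟩
    rcases eq_or_lt_of_le (hΔ m) with h0 | hpos
    · have hseg : c ∈ segment ℝ (PS.pm n k A B m) (PS.pm n k A B (m+1)) := by
        apply PS.hull_line ((PS.Sm n k A B m).1 '' Set.Icc 1 n) _ _ c
          (PS.vertex_side hn hk1 hkn' hS m) (PS.vertex_side' hn hk1 hkn' hS m) (hcK m)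
        rw [← PS.D3_rot]
        exact h0.symm
      exact hcon' m hm c hseg 0 le_rfl (by simp)
    · have hD' : 0 < det2 (PS.pm n k A B m - c) (PS.pm n k A B (m+1) - c) := hpos
      obtain ⟨x, hx, t, ht, hxe⟩ := PS.cross_lemma u _ _ c hu hD' h1 h2
      exact hcon' m hm x hx t ht hxe
  by_cases hall : ∀ m, M ≤ m → 0 < det2 u (PS.pm n k A B m - c)
  · have hφ : ∀ (x y : ℝ×ℝ) (a b : ℝ), 0 ≤ a → 0 ≤ b → a + b = 1 →
        det2 u ((a•x + b•y) - c) = a * det2 u (x - c) + b * det2 u (y - c) := by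
      intro x y a b _ _ hab
      have hb : b = 1 - a := by linarith
      subst hb
      simp only [det2, Prod.fst_add, Prod.snd_add, PS.smul_fst, PS.smul_snd,
        Prod.fst_sub, Prod.snd_sub]
      ring
    have hH := PS.convex_pos_half (fun x => det2 u (x - c)) hφ
    have h1 : c ∈ convexHull ℝ (PS.pm n k A B '' Set.Ici M) :=
      convexHull_min (fun v hv => by
        obtain ⟨j, ⟨hj1, hj2⟩, rfl⟩ := hv
        exact PS.hull_all hn hk1 hkn' hS M (M + 2*n + 2) le_rfl j hj1 hj2)
        (convex_convexHull ℝ _) (hcK (M + 2*n + 2))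
    have h2 : c ∈ {x : ℝ×ℝ | 0 < det2 u (x - c)} :=
      convexHull_min (fun v hv => by
        obtain ⟨r, hr, rfl⟩ := hv
        exact hall r hr) hH h1
    simp only [Set.mem_setOf_eq, sub_self] at h2
    rw [PS.det2_zero_right] at h2
    exact lt_irrefl 0 h2
  · push_neg at hall
    obtain ⟨m0, hm0M, hm0⟩ := hall
    have hneg : ∀ s : ℕ, det2 u (PS.pm n k A B (m0 + 1 + s) - c) < 0 := by
      intro s
      induction s with
      | zero =>
        by_contra h
        push_neg at h
        exact hnocross m0 hm0M ⟨hm0, h⟩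
      | succ s ih =>
        by_contra h
        push_neg at h
        exact hnocross (m0 + 1 + s) (by omega) ⟨le_of_lt ih, h⟩
    have hφ : ∀ (x y : ℝ×ℝ) (a b : ℝ), 0 ≤ a → 0 ≤ b → a + b = 1 →
        det2 u (c - (a•x + b•y)) = a * det2 u (c - x) + b * det2 u (c - y) := by
      intro x y a b _ _ hab
      have hb : b = 1 - a := by linarith
      subst hb
      simp only [det2, Prod.fst_add, Prod.snd_add, PS.smul_fst, PS.smul_snd,
        Prod.fst_sub, Prod.snd_sub]
      ring
    have hH := PS.convex_pos_half (fun x => det2 u (c - x)) hφ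
    have h1 : c ∈ convexHull ℝ (PS.pm n k A B '' Set.Ici (m0+1)) :=
      convexHull_min (fun v hv => by
        obtain ⟨j, ⟨hj1, hj2⟩, rfl⟩ := hv
        exact PS.hull_all hn hk1 hkn' hS (m0+1) ((m0+1) + 2*n + 2) le_rfl j hj1 hj2)
        (convex_convexHull ℝ _) (hcK ((m0+1) + 2*n + 2))
    have h2 : c ∈ {x : ℝ×ℝ | 0 < det2 u (c - x)} :=
      convexHull_min (fun v hv => by
        obtain ⟨r, hr, rfl⟩ := hv
        have hrr : m0 + 1 ≤ r := hr
        have hr' : det2 u (PS.pm n k A B r - c) < 0 := by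
          have h3 := hneg (r - (m0+1))
          rw [show m0 + 1 + (r - (m0+1)) = r by omega] at h3
          exact h3
        have h4 : det2 u (c - PS.pm n k A B r) = - det2 u (PS.pm n k A B r - c) := by
          simp only [det2, Prod.fst_sub, Prod.snd_sub]
          ring
        simp only [Set.mem_setOf_eq, h4]
        linarith) hH h1
    simp only [Set.mem_setOf_eq, sub_self] at h2
    rw [PS.det2_zero_right] at h2
    exact lt_irrefl 0 h2
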